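/- If D ⊆ Z_{2^k}^n is a linear code of cardinality n·2^k whose nonzero codewords all have wt*-weight in {n·2^{k-2}, n·2^{k-1}} and with minimum wt*-weight n·2^{k-2} (i.e., an (n, n·2^k, n·2^{k-2})* code), then D contains a codeword all of whose coordinates are units of Z_{2^k} (i.e., all coordinates odd). -/

import Mathlib

set_option maxHeartbeats 1000000

/-- `wt*` on `Z_{2^k}`. -/
def wtStarK (k : ℕ) (x : ZMod (2 ^ k)) : ℕ :=
  if x = 0 then 0 else if x = (2 ^ (k - 1) : ZMod (2 ^ k)) then 2 ^ (k - 1) else 2 ^ (k - 2)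

/-- The `wt*`-weight of a word in `Z_{2^k}^n`. -/
def wtStarW (k n : ℕ) (x : Fin n → ZMod (2 ^ k)) : ℕ :=
  ∑ i, wtStarK k (x i)

namespace Stmt18

variable {k : ℕ}

lemma hpow_ne_zero (hk : 1 ≤ k) : ((2 : ZMod (2 ^ k)) ^ (k - 1)) ≠ 0 := by
  have hcast : ((2 : ZMod (2 ^ k)) ^ (k - 1)) = ((2 ^ (k - 1) : ℕ) : ZMod (2 ^ k)) := by
    push_cast; ring
  rw [hcast, Ne, ZMod.natCast_eq_zero_iff]
  intro hdvd
  have h1 := Nat.le_of_dvd (by positivity) hdvd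
  have h2 : (2:ℕ) ^ (k - 1) < 2 ^ k := Nat.pow_lt_pow_right one_lt_two (by omega)
  omega

lemma hpow_mul_two (hk : 1 ≤ k) : ((2 : ZMod (2 ^ k)) ^ (k - 1)) * 2 = 0 := by
  have h1 : ((2 : ZMod (2 ^ k)) ^ (k - 1)) * 2 = 2 ^ k := by
    rw [← pow_succ]; congr 1; omega
  have h2 : ((2 : ZMod (2 ^ k)) ^ k) = ((2 ^ k : ℕ) : ZMod (2 ^ k)) := by push_cast; ring
  rw [h1, h2, ZMod.natCast_self]

lemma dichotomy (hk : 1 ≤ k) (a : ZMod (2 ^ k)) :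
    (2 : ZMod (2 ^ k)) ^ (k - 1) * a = 0 ∨
      ((2 : ZMod (2 ^ k)) ^ (k - 1) * a = (2 : ZMod (2 ^ k)) ^ (k - 1) ∧ IsUnit a) := by
  haveI : NeZero (2 ^ k) := ⟨by positivity⟩
  have ha : ((a.val : ℕ) : ZMod (2 ^ k)) = a := ZMod.natCast_rightInverse a
  rcases Nat.even_or_odd a.val with ⟨b, hb⟩ | ⟨b, hb⟩
  · left
    calc (2 : ZMod (2 ^ k)) ^ (k - 1) * a
        = ((2 : ZMod (2 ^ k)) ^ (k - 1) * 2) * (b : ZMod (2 ^ k)) := by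
          rw [← ha, hb]; push_cast; ring
      _ = 0 := by rw [hpow_mul_two hk, zero_mul]
  · right
    constructor
    · calc (2 : ZMod (2 ^ k)) ^ (k - 1) * a
          = ((2 : ZMod (2 ^ k)) ^ (k - 1) * 2) * (b : ZMod (2 ^ k))
              + (2 : ZMod (2 ^ k)) ^ (k - 1) := by
            rw [← ha, hb]; push_cast; ring
        _ = (2 : ZMod (2 ^ k)) ^ (k - 1) := by rw [hpow_mul_two hk, zero_mul, zero_add]
    · rw [← ha, ZMod.isUnit_iff_coprime]
      apply Nat.Coprime.pow_right
      rw [Nat.coprime_comm, Nat.Prime.coprime_iff_not_dvd Nat.prime_two]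
      omega

lemma hpow_add_hpow (hk : 1 ≤ k) :
    (2 : ZMod (2 ^ k)) ^ (k - 1) + (2 : ZMod (2 ^ k)) ^ (k - 1) = 0 := by
  have : (2 : ZMod (2 ^ k)) ^ (k - 1) + (2 : ZMod (2 ^ k)) ^ (k - 1)
      = (2 : ZMod (2 ^ k)) ^ (k - 1) * 2 := by ring
  rw [this, hpow_mul_two hk]

lemma wtStarK_zero : wtStarK k 0 = 0 := by
  simp [wtStarK]

lemma wtStarK_hpow (hk : 1 ≤ k) :
    wtStarK k ((2 : ZMod (2 ^ k)) ^ (k - 1)) = 2 ^ (k - 1) := by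
  rw [wtStarK, if_neg (hpow_ne_zero hk), if_pos rfl]

lemma wtStarK_formula (hk : 2 ≤ k) (d : ZMod (2 ^ k)) :
    wtStarK k d =
      2 ^ (k - 2) *
        ((if d = 0 then 0 else 1) + (if d = (2 : ZMod (2 ^ k)) ^ (k - 1) then 1 else 0)) := by
  by_cases h0 : d = 0
  · subst h0
    rw [wtStarK_zero, if_pos rfl, if_neg (Ne.symm (hpow_ne_zero (by omega)))]
    simp
  · by_cases hh : d = (2 : ZMod (2 ^ k)) ^ (k - 1)
    · subst hh
      rw [wtStarK_hpow (by omega), if_neg h0, if_pos rfl]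
      have : (2:ℕ) ^ (k - 1) = 2 ^ (k - 2) * 2 := by
        rw [← pow_succ]; congr 1; omega
      omega
    · rw [wtStarK, if_neg h0, if_neg hh, if_neg h0, if_neg hh]
      simp

lemma wtStarW_ge {r : ℕ} (hk : 2 ≤ k)
    (D : Submodule (ZMod (2 ^ k)) (Fin (2 ^ r) → ZMod (2 ^ k)))
    (hwts : ∀ x ∈ D, x ≠ 0 →
      wtStarW k (2 ^ r) x = 2 ^ r * 2 ^ (k - 2) ∨
        wtStarW k (2 ^ r) x = 2 ^ r * 2 ^ (k - 1))
    (x : Fin (2 ^ r) → ZMod (2 ^ k)) (hx : x ∈ D) (hx0 : x ≠ 0) :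
    2 ^ r * 2 ^ (k - 2) ≤ wtStarW k (2 ^ r) x := by
  rcases hwts x hx hx0 with h | h
  · omega
  · rw [h]
    exact Nat.mul_le_mul_left _ (Nat.pow_le_pow_right (by norm_num) (by omega))

/-- Step A: every coordinate has a codeword which is "odd" there. -/
lemma stepA {r : ℕ} (hk : 2 ≤ k)
    (D : Submodule (ZMod (2 ^ k)) (Fin (2 ^ r) → ZMod (2 ^ k)))
    (hcard : Nat.card D = 2 ^ r * 2 ^ k)
    (hwts : ∀ x ∈ D, x ≠ 0 →
      wtStarW k (2 ^ r) x = 2 ^ r * 2 ^ (k - 2) ∨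
        wtStarW k (2 ^ r) x = 2 ^ r * 2 ^ (k - 1))
    (i : Fin (2 ^ r)) :
    ∃ x ∈ D, (2 : ZMod (2 ^ k)) ^ (k - 1) * x i = (2 : ZMod (2 ^ k)) ^ (k - 1) := by
  classical
  haveI : NeZero (2 ^ k) := ⟨by positivity⟩
  by_contra hcon
  push_neg at hcon
  -- every codeword is "even" at coordinate i
  have heven : ∀ x ∈ D, (2 : ZMod (2 ^ k)) ^ (k - 1) * x i = 0 := by
    intro x hx
    rcases dichotomy (k := k) (by omega) (x i) with h | ⟨h, _⟩
    · exact h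
    · exact absurd h (hcon x hx)
  haveI : Finite D := by infer_instance
  -- the projection hom and its kernel
  let f : D →+ ZMod (2 ^ k) := AddMonoidHom.mk'
    (fun x => (x : Fin (2 ^ r) → ZMod (2 ^ k)) i) (by intro a b; rfl)
  -- multiplication by 2^(k-1)
  let ψ : ZMod (2 ^ k) →+ ZMod (2 ^ k) := AddMonoidHom.mulLeft ((2 : ZMod (2 ^ k)) ^ (k - 1))
  have hrange : f.range ≤ ψ.ker := by
    rintro y ⟨x, rfl⟩
    exact heven x.1 x.2
  -- card of ker ψ
  have hψcard : Nat.card (ZMod (2 ^ k)) = Nat.card (ψ.range) * Nat.card (ψ.ker) := by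
    rw [AddSubgroup.card_eq_card_quotient_mul_card_addSubgroup ψ.ker,
      Nat.card_congr (QuotientAddGroup.quotientKerEquivRange ψ).toEquiv]
  have hψr : 2 ≤ Nat.card (ψ.range) := by
    rw [Nat.succ_le_iff, Finite.one_lt_card_iff_nontrivial]
    refine ⟨⟨⟨(2 : ZMod (2 ^ k)) ^ (k - 1), ⟨1, mul_one _⟩⟩, ⟨0, ⟨0, mul_zero _⟩⟩, ?_⟩⟩
    intro hcontra
    exact hpow_ne_zero (by omega) (congrArg Subtype.val hcontra)
  have hkerψ : Nat.card (ψ.ker) ≤ 2 ^ (k - 1) := by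
    have hcards : Nat.card (ZMod (2 ^ k)) = 2 ^ k := Nat.card_zmod _
    have h2k : (2:ℕ) ^ k = 2 ^ (k - 1) * 2 := by rw [← pow_succ]; congr 1; omega
    have heq := hψcard
    rw [hcards] at heq
    nlinarith [Nat.card_pos (α := ψ.ker), Nat.card_pos (α := ψ.range)]
  -- card of D in terms of the kernel of f
  have hDcard : Nat.card D = Nat.card (f.range) * Nat.card (f.ker) := by
    rw [AddSubgroup.card_eq_card_quotient_mul_card_addSubgroup f.ker,
      Nat.card_congr (QuotientAddGroup.quotientKerEquivRange f).toEquiv]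
  have hfr : Nat.card (f.range) ≤ 2 ^ (k - 1) :=
    le_trans (AddSubgroup.card_le_of_le hrange) hkerψ
  set m : ℕ := Nat.card (f.ker) with hm
  haveI : Nonempty f.ker := ⟨0⟩
  have hmpos : 0 < m := Nat.card_pos
  have hmge : 2 * 2 ^ r ≤ m := by
    have h1 : 2 ^ r * (2 ^ (k-1) * 2) ≤ 2 ^ (k - 1) * m := by
      have hsp : (2:ℕ) ^ (k-1) * 2 = 2 ^ k := by rw [← pow_succ]; congr 1; omega
      rw [hsp]
      calc (2:ℕ) ^ r * 2 ^ k = Nat.card D := by rw [hcard]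
        _ = Nat.card (f.range) * Nat.card (f.ker) := hDcard
        _ ≤ 2 ^ (k - 1) * m := Nat.mul_le_mul_right _ hfr
    have h2 : 2 ^ (k-1) * (2 * 2 ^ r) ≤ 2 ^ (k - 1) * m := by
      calc (2:ℕ) ^ (k-1) * (2 * 2 ^ r) = 2 ^ r * (2 ^ (k-1) * 2) := by ring
        _ ≤ 2 ^ (k - 1) * m := h1
    exact Nat.le_of_mul_le_mul_left h2 (by positivity)
  -- now the Plotkin double count over the kernel
  haveI : Fintype (f.ker) := Fintype.ofFinite _
  have hmcard : m = Fintype.card (f.ker) := by rw [hm, Nat.card_eq_fintype_card]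
  have hker0 : ∀ x : f.ker, (x.1 : Fin (2 ^ r) → ZMod (2 ^ k)) i = 0 := fun x => x.2
  -- d(x,y) := wtStarW of the difference
  set S : ℕ := ∑ x : f.ker, ∑ y : f.ker,
      wtStarW k (2 ^ r) ((x.1 : Fin (2 ^ r) → ZMod (2 ^ k)) - (y.1 : Fin (2 ^ r) → ZMod (2 ^ k))) with hS
  -- lower bound
  have hlow : m * ((m - 1) * ((2 ^ r) * 2 ^ (k - 2))) ≤ S := by
    rw [hS]
    have hone : ∀ x : f.ker,
        (m - 1) * ((2 ^ r) * 2 ^ (k - 2)) ≤ ∑ y : f.ker,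
          wtStarW k (2 ^ r) ((x.1 : Fin (2 ^ r) → ZMod (2 ^ k)) - (y.1 : Fin (2 ^ r) → ZMod (2 ^ k))) := by
      intro x
      have hsub : (Finset.univ.erase x) ⊆ Finset.univ := Finset.erase_subset _ _
      have hstep : ∀ y ∈ Finset.univ.erase x,
          (2 ^ r) * 2 ^ (k - 2) ≤
            wtStarW k (2 ^ r) ((x.1 : Fin (2 ^ r) → ZMod (2 ^ k)) - (y.1 : Fin (2 ^ r) → ZMod (2 ^ k))) := by
        intro y hy
        have hxy : y ≠ x := Finset.ne_of_mem_erase hy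
        have hne : (x.1 : Fin (2 ^ r) → ZMod (2 ^ k)) - (y.1 : Fin (2 ^ r) → ZMod (2 ^ k)) ≠ 0 := by
          intro hzero
          apply hxy
          have : (x.1 : Fin (2 ^ r) → ZMod (2 ^ k)) = (y.1 : Fin (2 ^ r) → ZMod (2 ^ k)) :=
            sub_eq_zero.mp hzero
          exact Subtype.ext (Subtype.ext this.symm)
        have hmem : (x.1 : Fin (2 ^ r) → ZMod (2 ^ k)) - (y.1 : Fin (2 ^ r) → ZMod (2 ^ k)) ∈ D :=
          sub_mem x.1.2 y.1.2
        exact wtStarW_ge hk D hwts _ hmem hne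
      calc (m - 1) * ((2 ^ r) * 2 ^ (k - 2))
          = (Finset.univ.erase x).card * ((2 ^ r) * 2 ^ (k-2)) := by
            rw [Finset.card_erase_of_mem (Finset.mem_univ _), Finset.card_univ, hmcard]
        _ ≤ ∑ y ∈ Finset.univ.erase x,
              wtStarW k (2 ^ r) ((x.1 : Fin (2 ^ r) → ZMod (2 ^ k)) - (y.1 : Fin (2 ^ r) → ZMod (2 ^ k))) := by
            rw [← smul_eq_mul]
            exact Finset.card_nsmul_le_sum _ _ _ hstep
        _ ≤ _ := Finset.sum_le_sum_of_subset hsub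
    calc m * ((m - 1) * ((2 ^ r) * 2 ^ (k - 2)))
        = ∑ _x : f.ker, (m - 1) * ((2 ^ r) * 2 ^ (k - 2)) := by
          rw [Finset.sum_const, Finset.card_univ, ← hmcard, smul_eq_mul]
      _ ≤ _ := Finset.sum_le_sum (fun x _ => hone x)
  -- upper bound
  have hup : S ≤ ((2 ^ r) - 1) * (2 ^ (k - 2) * (m * m)) := by
    have hswap : S = ∑ j : Fin (2 ^ r), ∑ x : f.ker, ∑ y : f.ker,
        wtStarK k ((x.1 : Fin (2 ^ r) → ZMod (2 ^ k)) j - (y.1 : Fin (2 ^ r) → ZMod (2 ^ k)) j) := by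
      calc S = ∑ x : f.ker, ∑ j : Fin (2 ^ r), ∑ y : f.ker,
          wtStarK k ((x.1 : Fin (2 ^ r) → ZMod (2 ^ k)) j
            - (y.1 : Fin (2 ^ r) → ZMod (2 ^ k)) j) := by
            rw [hS]
            simp only [wtStarW, Pi.sub_apply]
            exact Finset.sum_congr rfl fun x _ => Finset.sum_comm
        _ = _ := Finset.sum_comm
    rw [hswap]
    have hjbound : ∀ j : Fin (2 ^ r), j ≠ i → (∑ x : f.ker, ∑ y : f.ker,
        wtStarK k ((x.1 : Fin (2 ^ r) → ZMod (2 ^ k)) j - (y.1 : Fin (2 ^ r) → ZMod (2 ^ k)) j))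
        ≤ 2 ^ (k - 2) * (m * m) := by
      intro j _
      -- rewrite as sum over product
      rw [← Finset.sum_product']
      set P := (Finset.univ : Finset (f.ker × f.ker)) with hP
      have hX : ∀ p : f.ker × f.ker,
          wtStarK k ((p.1.1 : Fin (2 ^ r) → ZMod (2 ^ k)) j - (p.2.1 : Fin (2 ^ r) → ZMod (2 ^ k)) j)
          = 2 ^ (k-2) * ((if ((p.1.1 : Fin (2 ^ r) → ZMod (2 ^ k)) j
              - (p.2.1 : Fin (2 ^ r) → ZMod (2 ^ k)) j) = 0 then 0 else 1)
            + (if ((p.1.1 : Fin (2 ^ r) → ZMod (2 ^ k)) j - (p.2.1 : Fin (2 ^ r) → ZMod (2 ^ k)) j)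
              = ((2 : ZMod (2 ^ k)) ^ (k - 1)) then 1 else 0)) := fun p => wtStarK_formula hk _
      have hA : (P.filter (fun p : f.ker × f.ker =>
            ((p.1.1 : Fin (2 ^ r) → ZMod (2 ^ k)) j - (p.2.1 : Fin (2 ^ r) → ZMod (2 ^ k)) j) = ((2 : ZMod (2 ^ k)) ^ (k - 1)))).card
          ≤ (P.filter (fun p : f.ker × f.ker =>
            ((p.1.1 : Fin (2 ^ r) → ZMod (2 ^ k)) j - (p.2.1 : Fin (2 ^ r) → ZMod (2 ^ k)) j) = 0)).card := by
        by_cases hex : ∃ p : f.ker × f.ker,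
            ((p.1.1 : Fin (2 ^ r) → ZMod (2 ^ k)) j - (p.2.1 : Fin (2 ^ r) → ZMod (2 ^ k)) j) = ((2 : ZMod (2 ^ k)) ^ (k - 1))
        · obtain ⟨p₀, hw0⟩ := hex
          set z : f.ker := p₀.1 - p₀.2 with hz
          have hzj : (z.1 : Fin (2 ^ r) → ZMod (2 ^ k)) j = ((2 : ZMod (2 ^ k)) ^ (k - 1)) := by
            rw [hz]; exact hw0
          apply Finset.card_le_card_of_injOn (fun p => (p.1, p.2 + z))
          · intro p hpmem
            simp only [Finset.mem_coe, Finset.mem_filter, hP, Finset.mem_univ, true_and] at hpmem ⊢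
            have : ((p.2 + z).1 : Fin (2 ^ r) → ZMod (2 ^ k)) j
                = (p.2.1 : Fin (2 ^ r) → ZMod (2 ^ k)) j + ((2 : ZMod (2 ^ k)) ^ (k - 1)) := by
              rw [← hzj]; rfl
            rw [this]
            have := hpmem
            rw [sub_eq_iff_eq_add] at this ⊢
            rw [this]; ring
          · intro p _ p' _ hEq
            have hEq' : (p.1, p.2 + z) = (p'.1, p'.2 + z) := hEq
            obtain ⟨h1, h2⟩ := Prod.mk.inj hEq'

            have h2' : p.2 = p'.2 := by
              have := congrArg (fun w => w - z) h2
              simpa using this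
            exact Prod.ext h1 h2'
        · push_neg at hex
          have : (P.filter (fun p : f.ker × f.ker =>
              ((p.1.1 : Fin (2 ^ r) → ZMod (2 ^ k)) j - (p.2.1 : Fin (2 ^ r) → ZMod (2 ^ k)) j) = ((2 : ZMod (2 ^ k)) ^ (k - 1)))) = ∅ := by
            apply Finset.filter_false_of_mem
            intro p _
            exact hex p
          rw [this]
          simp
      calc (∑ p ∈ P,
            wtStarK k ((p.1.1 : Fin (2 ^ r) → ZMod (2 ^ k)) j - (p.2.1 : Fin (2 ^ r) → ZMod (2 ^ k)) j))
          = ∑ p ∈ P, 2 ^ (k-2) * ((if ((p.1.1 : Fin (2 ^ r) → ZMod (2 ^ k)) j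
              - (p.2.1 : Fin (2 ^ r) → ZMod (2 ^ k)) j) = 0 then 0 else 1)
            + (if ((p.1.1 : Fin (2 ^ r) → ZMod (2 ^ k)) j - (p.2.1 : Fin (2 ^ r) → ZMod (2 ^ k)) j)
              = ((2 : ZMod (2 ^ k)) ^ (k - 1)) then 1 else 0)) := Finset.sum_congr rfl (fun p _ => hX p)
        _ ≤ 2 ^ (k - 2) * (m * m) := by
            rw [← Finset.mul_sum]
            apply Nat.mul_le_mul_left
            rw [Finset.sum_add_distrib]
            have e1 : (∑ p ∈ P, (if ((p.1.1 : Fin (2 ^ r) → ZMod (2 ^ k)) j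
                - (p.2.1 : Fin (2 ^ r) → ZMod (2 ^ k)) j) = 0 then 0 else 1))
                = P.card - (P.filter (fun p : f.ker × f.ker =>
                  ((p.1.1 : Fin (2 ^ r) → ZMod (2 ^ k)) j
                    - (p.2.1 : Fin (2 ^ r) → ZMod (2 ^ k)) j) = 0)).card := by
              have estep : (∑ p ∈ P, (if ((p.1.1 : Fin (2 ^ r) → ZMod (2 ^ k)) j
                  - (p.2.1 : Fin (2 ^ r) → ZMod (2 ^ k)) j) = 0 then 0 else 1))
                  = (P.filter (fun p : f.ker × f.ker =>
                    ¬ ((p.1.1 : Fin (2 ^ r) → ZMod (2 ^ k)) j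
                      - (p.2.1 : Fin (2 ^ r) → ZMod (2 ^ k)) j) = 0)).card := by
                rw [Finset.card_filter]
                refine Finset.sum_congr rfl fun p _ => ?_
                by_cases hcnd : ((p.1.1 : Fin (2 ^ r) → ZMod (2 ^ k)) j
                    - (p.2.1 : Fin (2 ^ r) → ZMod (2 ^ k)) j) = 0 <;> simp [hcnd]
              rw [estep, Finset.filter_not]
              exact Finset.card_sdiff_of_subset (Finset.filter_subset _ _)
            have e2 : (∑ p ∈ P, (if ((p.1.1 : Fin (2 ^ r) → ZMod (2 ^ k)) j
                - (p.2.1 : Fin (2 ^ r) → ZMod (2 ^ k)) j) = ((2 : ZMod (2 ^ k)) ^ (k - 1)) then 1 else 0))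
                = (P.filter (fun p : f.ker × f.ker =>
                  ((p.1.1 : Fin (2 ^ r) → ZMod (2 ^ k)) j
                    - (p.2.1 : Fin (2 ^ r) → ZMod (2 ^ k)) j) = ((2 : ZMod (2 ^ k)) ^ (k - 1)))).card := by
              exact (Finset.card_filter _ _).symm
            rw [e1, e2]
            have hPcard : P.card = m * m := by
              rw [hP, Finset.card_univ, Fintype.card_prod, ← hmcard]
            have hle := Finset.card_filter_le P (fun p : f.ker × f.ker =>
                  ((p.1.1 : Fin (2 ^ r) → ZMod (2 ^ k)) j
                    - (p.2.1 : Fin (2 ^ r) → ZMod (2 ^ k)) j) = 0)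
            omega
    have hi0 : (∑ x : f.ker, ∑ y : f.ker,
        wtStarK k ((x.1 : Fin (2 ^ r) → ZMod (2 ^ k)) i - (y.1 : Fin (2 ^ r) → ZMod (2 ^ k)) i)) = 0 := by
      apply Finset.sum_eq_zero
      intro x _
      apply Finset.sum_eq_zero
      intro y _
      rw [hker0 x, hker0 y, sub_zero, wtStarK_zero]
    calc (∑ j : Fin (2 ^ r), ∑ x : f.ker, ∑ y : f.ker,
          wtStarK k ((x.1 : Fin (2 ^ r) → ZMod (2 ^ k)) j - (y.1 : Fin (2 ^ r) → ZMod (2 ^ k)) j))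
        = (∑ x : f.ker, ∑ y : f.ker,
            wtStarK k ((x.1 : Fin (2 ^ r) → ZMod (2 ^ k)) i - (y.1 : Fin (2 ^ r) → ZMod (2 ^ k)) i))
          + ∑ j ∈ Finset.univ.erase i, ∑ x : f.ker, ∑ y : f.ker,
            wtStarK k ((x.1 : Fin (2 ^ r) → ZMod (2 ^ k)) j - (y.1 : Fin (2 ^ r) → ZMod (2 ^ k)) j) := by
          exact (Finset.add_sum_erase _ _ (Finset.mem_univ i)).symm
      _ ≤ 0 + ∑ j ∈ Finset.univ.erase i, 2 ^ (k - 2) * (m * m) := by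
          rw [hi0]
          exact Nat.add_le_add_left (Finset.sum_le_sum
            (fun j hj => hjbound j (Finset.ne_of_mem_erase hj))) 0
      _ = ((2 ^ r) - 1) * (2 ^ (k - 2) * (m * m)) := by
          rw [zero_add, Finset.sum_const, smul_eq_mul,
            Finset.card_erase_of_mem (Finset.mem_univ i), Finset.card_univ, Fintype.card_fin]
  -- combine
  have hcomb := le_trans hlow hup
  -- cancel and contradict
  have hn1 : 1 ≤ (2 ^ r) := Nat.one_le_two_pow
  obtain ⟨M, hM⟩ : ∃ M, m = M + 2 := ⟨m - 2, by omega⟩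
  obtain ⟨N, hN⟩ : ∃ N, (2 ^ r) = N + 1 := ⟨(2 ^ r) - 1, by omega⟩
  rw [hM, hN] at hcomb hmge
  have hc2 : 0 < 2 ^ (k - 2) := by positivity
  have key2 : (M + 1) * (N + 1) ≤ N * (M + 2) := by
    have h1 : ((M + 2) * 2 ^ (k - 2)) * ((M + 1) * (N + 1))
        ≤ ((M + 2) * 2 ^ (k - 2)) * (N * (M + 2)) := by
      have e1 : M + 2 - 1 = M + 1 := by omega
      have e2 : N + 1 - 1 = N := by omega
      calc ((M + 2) * 2 ^ (k - 2)) * ((M + 1) * (N + 1))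
          = (M + 2) * ((M + 2 - 1) * ((N + 1) * 2 ^ (k - 2))) := by
            rw [e1]; ring
        _ ≤ (N + 1 - 1) * (2 ^ (k - 2) * ((M + 2) * (M + 2))) := hcomb
        _ = ((M + 2) * 2 ^ (k - 2)) * (N * (M + 2)) := by
            rw [e2]; ring
    exact Nat.le_of_mul_le_mul_left h1 (by positivity)
  nlinarith [key2, hmge]

end Stmt18

/-- If `D ⊆ Z_{2^k}^n` (`n = 2^r` a power of 2) is a linear code of cardinality
`n·2^k` all of whose nonzero codewords have `wt*`-weight `n·2^{k-2}` or `n·2^{k-1}`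
(an `(n, n·2^k, n·2^{k-2})*` code), then `D` contains a codeword all of whose
coordinates are units of `Z_{2^k}`, i.e. odd. -/
theorem stmt_18 (k r : ℕ) (hk : 2 ≤ k)
    (D : Submodule (ZMod (2 ^ k)) (Fin (2 ^ r) → ZMod (2 ^ k)))
    (hcard : Nat.card D = 2 ^ r * 2 ^ k)
    (hwts : ∀ x ∈ D, x ≠ 0 →
      wtStarW k (2 ^ r) x = 2 ^ r * 2 ^ (k - 2) ∨
        wtStarW k (2 ^ r) x = 2 ^ r * 2 ^ (k - 1)) :
    ∃ c ∈ D, ∀ i, IsUnit (c i) := by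
  classical
  haveI : NeZero (2 ^ k) := ⟨by positivity⟩
  by_contra hno
  push_neg at hno
  haveI : Finite D := by infer_instance
  haveI : Fintype D := Fintype.ofFinite _
  have hpne : ((2 : ZMod (2 ^ k)) ^ (k - 1)) ≠ 0 := Stmt18.hpow_ne_zero (by omega)
  have hp2 : ((2 : ZMod (2 ^ k)) ^ (k - 1)) * 2 = 0 := Stmt18.hpow_mul_two (by omega)
  -- the count of "odd" coordinates
  set O : D → ℕ := fun x =>
    (Finset.univ.filter (fun j : Fin (2 ^ r) => ((2 : ZMod (2 ^ k)) ^ (k - 1)) * (x : Fin (2 ^ r) → ZMod (2 ^ k)) j = ((2 : ZMod (2 ^ k)) ^ (k - 1)))).card with hO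
  -- Step B : each x has O x = 0 or O x * 2 = (2 ^ r)
  have key2 : ∀ x : D, O x = 0 ∨ O x * 2 = (2 ^ r) := by
    intro x
    by_cases h0 : O x = 0
    · exact Or.inl h0
    · set c : Fin (2 ^ r) → ZMod (2 ^ k) := fun j => ((2 : ZMod (2 ^ k)) ^ (k - 1)) * (x : Fin (2 ^ r) → ZMod (2 ^ k)) j with hc
      have hcD : c ∈ D := by
        have hceq : c = ((2 : ZMod (2 ^ k)) ^ (k - 1)) • (x : Fin (2 ^ r) → ZMod (2 ^ k)) := by
          funext j; simp [hc, Pi.smul_apply, smul_eq_mul]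
        rw [hceq]
        exact Submodule.smul_mem D ((2 : ZMod (2 ^ k)) ^ (k - 1)) x.2
      -- weight of c
      have hwc : wtStarW k (2 ^ r) c = O x * 2 ^ (k - 1) := by
        rw [wtStarW, ← Finset.sum_filter_add_sum_filter_not Finset.univ
          (fun j : Fin (2 ^ r) => ((2 : ZMod (2 ^ k)) ^ (k - 1)) * (x : Fin (2 ^ r) → ZMod (2 ^ k)) j = ((2 : ZMod (2 ^ k)) ^ (k - 1)))]
        have hA : (∑ j ∈ Finset.univ.filter
            (fun j : Fin (2 ^ r) => ((2 : ZMod (2 ^ k)) ^ (k - 1)) * (x : Fin (2 ^ r) → ZMod (2 ^ k)) j = ((2 : ZMod (2 ^ k)) ^ (k - 1))), wtStarK k (c j))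
            = O x * 2 ^ (k - 1) := by
          have hterm : ∀ j ∈ Finset.univ.filter
              (fun j : Fin (2 ^ r) => ((2 : ZMod (2 ^ k)) ^ (k - 1)) * (x : Fin (2 ^ r) → ZMod (2 ^ k)) j = ((2 : ZMod (2 ^ k)) ^ (k - 1))),
              wtStarK k (c j) = 2 ^ (k - 1) := by
            intro j hj
            rw [Finset.mem_filter] at hj
            show wtStarK k (((2 : ZMod (2 ^ k)) ^ (k - 1)) * (x : Fin (2 ^ r) → ZMod (2 ^ k)) j) = 2 ^ (k - 1)
            rw [hj.2]
            exact Stmt18.wtStarK_hpow (by omega)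
          rw [Finset.sum_congr rfl hterm, Finset.sum_const, smul_eq_mul]
        have hB : (∑ j ∈ Finset.univ.filter
            (fun j : Fin (2 ^ r) => ¬ ((2 : ZMod (2 ^ k)) ^ (k - 1)) * (x : Fin (2 ^ r) → ZMod (2 ^ k)) j = ((2 : ZMod (2 ^ k)) ^ (k - 1))), wtStarK k (c j))
            = 0 := by
          apply Finset.sum_eq_zero
          intro j hj
          rw [Finset.mem_filter] at hj
          show wtStarK k (((2 : ZMod (2 ^ k)) ^ (k - 1)) * (x : Fin (2 ^ r) → ZMod (2 ^ k)) j) = 0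
          rcases Stmt18.dichotomy (k := k) (by omega) ((x : Fin (2 ^ r) → ZMod (2 ^ k)) j)
            with hd | ⟨hd, _⟩
          · rw [hd]; exact Stmt18.wtStarK_zero
          · exact absurd hd hj.2
        rw [hA, hB, add_zero]
      -- c is nonzero
      have hcne : c ≠ 0 := by
        have hpos : 0 < O x := Nat.pos_of_ne_zero h0
        simp only [hO] at hpos
        obtain ⟨j, hj⟩ := Finset.card_pos.mp hpos
        rw [Finset.mem_filter] at hj
        intro hzero
        have hcj : ((2 : ZMod (2 ^ k)) ^ (k - 1)) * (x : Fin (2 ^ r) → ZMod (2 ^ k)) j = 0 :=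
          congrFun hzero j
        rw [hj.2] at hcj
        exact hpne hcj
      rcases hwts c hcD hcne with hcase | hcase
    -- we inserted hwc into both cases below
      · right
        rw [hwc] at hcase
        have hsplit : (2:ℕ) ^ (k - 1) = 2 ^ (k - 2) * 2 := by
          rw [← pow_succ]
          congr 1
          omega
        rw [hsplit] at hcase
        have : (O x * 2) * 2 ^ (k - 2) = (2 ^ r) * 2 ^ (k - 2) := by
          calc (O x * 2) * 2 ^ (k - 2) = O x * (2 ^ (k - 2) * 2) := by ring
            _ = (2 ^ r) * 2 ^ (k - 2) := hcase
        exact Nat.eq_of_mul_eq_mul_right (by positivity) this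
      · exfalso
        rw [hwc] at hcase
        have hOn : O x = (2 ^ r) := Nat.eq_of_mul_eq_mul_right (by positivity) hcase
        -- then every coordinate is a unit
        have hall : ∀ j : Fin (2 ^ r), IsUnit ((x : Fin (2 ^ r) → ZMod (2 ^ k)) j) := by
          intro j
          have huniv : (Finset.univ.filter
              (fun j : Fin (2 ^ r) => ((2 : ZMod (2 ^ k)) ^ (k - 1)) * (x : Fin (2 ^ r) → ZMod (2 ^ k)) j = ((2 : ZMod (2 ^ k)) ^ (k - 1)))) = Finset.univ := by
            apply Finset.eq_univ_of_card
            rw [Fintype.card_fin]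
            exact hOn
          have hjmem : j ∈ Finset.univ.filter
              (fun j : Fin (2 ^ r) => ((2 : ZMod (2 ^ k)) ^ (k - 1)) * (x : Fin (2 ^ r) → ZMod (2 ^ k)) j = ((2 : ZMod (2 ^ k)) ^ (k - 1))) := by
            rw [huniv]; exact Finset.mem_univ j
          rw [Finset.mem_filter] at hjmem
          rcases Stmt18.dichotomy (k := k) (by omega) ((x : Fin (2 ^ r) → ZMod (2 ^ k)) j)
            with hd | ⟨_, hu⟩
          · exact absurd (hjmem.2.symm.trans hd) hpne
          · exact hu
        obtain ⟨i, hi⟩ := hno (x : Fin (2 ^ r) → ZMod (2 ^ k)) x.2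
        exact hi (hall i)
  -- Step C: double counting
  have hcount : ∀ j : Fin (2 ^ r),
      (Finset.univ.filter (fun x : D => ((2 : ZMod (2 ^ k)) ^ (k - 1)) * (x : Fin (2 ^ r) → ZMod (2 ^ k)) j = ((2 : ZMod (2 ^ k)) ^ (k - 1)))).card * 2
        = Fintype.card D := by
    intro j
    obtain ⟨x₀v, hx₀D, hx₀⟩ := Stmt18.stepA hk D hcard hwts j
    set x₀ : D := ⟨x₀v, hx₀D⟩ with hx₀def
    have hx₀j : ((2 : ZMod (2 ^ k)) ^ (k - 1)) * (x₀ : Fin (2 ^ r) → ZMod (2 ^ k)) j = ((2 : ZMod (2 ^ k)) ^ (k - 1)) := hx₀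
    have hcards : (Finset.univ.filter
          (fun x : D => ((2 : ZMod (2 ^ k)) ^ (k - 1)) * (x : Fin (2 ^ r) → ZMod (2 ^ k)) j = ((2 : ZMod (2 ^ k)) ^ (k - 1)))).card
        = (Finset.univ.filter
          (fun x : D => ¬ ((2 : ZMod (2 ^ k)) ^ (k - 1)) * (x : Fin (2 ^ r) → ZMod (2 ^ k)) j = ((2 : ZMod (2 ^ k)) ^ (k - 1)))).card := by
      apply Finset.card_bij' (fun x _ => x + x₀) (fun y _ => y - x₀)
      · intro x hx
        rw [Finset.mem_filter] at hx ⊢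
        refine ⟨Finset.mem_univ _, ?_⟩
        have hadd : (((x + x₀ : D)) : Fin (2 ^ r) → ZMod (2 ^ k)) j
            = (x : Fin (2 ^ r) → ZMod (2 ^ k)) j + (x₀ : Fin (2 ^ r) → ZMod (2 ^ k)) j := rfl
        rw [hadd, mul_add, hx.2, hx₀j]
        intro habs
        have : ((2 : ZMod (2 ^ k)) ^ (k - 1)) + ((2 : ZMod (2 ^ k)) ^ (k - 1)) = ((2 : ZMod (2 ^ k)) ^ (k - 1)) * 2 := by ring
        rw [this, hp2] at habs
        exact hpne habs.symm
      · intro y hy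
        rw [Finset.mem_filter] at hy ⊢
        refine ⟨Finset.mem_univ _, ?_⟩
        have hsub : (((y - x₀ : D)) : Fin (2 ^ r) → ZMod (2 ^ k)) j
            = (y : Fin (2 ^ r) → ZMod (2 ^ k)) j - (x₀ : Fin (2 ^ r) → ZMod (2 ^ k)) j := rfl
        have hy0 : ((2 : ZMod (2 ^ k)) ^ (k - 1)) * (y : Fin (2 ^ r) → ZMod (2 ^ k)) j = 0 := by
          rcases Stmt18.dichotomy (k := k) (by omega) ((y : Fin (2 ^ r) → ZMod (2 ^ k)) j)
            with hd | ⟨hd, _⟩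
          · exact hd
          · exact absurd hd hy.2
        rw [hsub, mul_sub, hy0, hx₀j, zero_sub]
        have hneg : -((2 : ZMod (2 ^ k)) ^ (k - 1)) = ((2 : ZMod (2 ^ k)) ^ (k - 1)) :=
          neg_eq_of_add_eq_zero_left (Stmt18.hpow_add_hpow (by omega))
        rw [hneg]
      · intro x _; simp
      · intro y _; simp
    have := Finset.card_filter_add_card_filter_not (s := (Finset.univ : Finset D))
      (p := fun x : D => ((2 : ZMod (2 ^ k)) ^ (k - 1)) * (x : Fin (2 ^ r) → ZMod (2 ^ k)) j = ((2 : ZMod (2 ^ k)) ^ (k - 1)))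
    rw [Finset.card_univ] at this
    omega
  -- sum of O over D
  have hsum1 : (∑ x : D, O x) = ∑ j : Fin (2 ^ r),
      (Finset.univ.filter (fun x : D => ((2 : ZMod (2 ^ k)) ^ (k - 1)) * (x : Fin (2 ^ r) → ZMod (2 ^ k)) j = ((2 : ZMod (2 ^ k)) ^ (k - 1)))).card := by
    have h1 : (∑ x : D, O x) = ∑ x : D, ∑ j : Fin (2 ^ r),
        (if ((2 : ZMod (2 ^ k)) ^ (k - 1)) * (x : Fin (2 ^ r) → ZMod (2 ^ k)) j = ((2 : ZMod (2 ^ k)) ^ (k - 1)) then 1 else 0) := by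
      apply Finset.sum_congr rfl
      intro x _
      simp only [hO]
      exact Finset.card_filter _ _
    rw [h1, Finset.sum_comm]
    apply Finset.sum_congr rfl
    intro j _
    exact (Finset.card_filter _ _).symm
  have htot : (∑ x : D, O x) * 2 = (2 ^ r) * Fintype.card D := by
    rw [hsum1, Finset.sum_mul]
    rw [Finset.sum_congr rfl (fun j _ => hcount j), Finset.sum_const, smul_eq_mul,
      Finset.card_univ, Fintype.card_fin]
  -- zero codeword
  have hO0 : O (0 : D) = 0 := by
    simp only [hO]
    apply Finset.card_eq_zero.mpr
    apply Finset.filter_false_of_mem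
    intro j _
    have : ((0 : D) : Fin (2 ^ r) → ZMod (2 ^ k)) j = 0 := rfl
    rw [this, mul_zero]
    exact fun habs => hpne habs.symm
  -- upper bound on the sum
  have hub : (∑ x : D, O x) * 2 ≤ (Fintype.card D - 1) * (2 ^ r) := by
    have h1 : (∑ x : D, O x) * 2 = ∑ x : D, (O x * 2) := by
      rw [Finset.sum_mul]
    rw [h1, ← Finset.add_sum_erase _ _ (Finset.mem_univ (0 : D)), hO0]
    simp only [Nat.zero_mul, zero_add]
    calc (∑ x ∈ Finset.univ.erase (0 : D), O x * 2)
        ≤ ∑ _x ∈ Finset.univ.erase (0 : D), (2 ^ r) := by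
          apply Finset.sum_le_sum
          intro x _
          rcases key2 x with h | h
          · rw [h]; simp
          · exact le_of_eq h
      _ = (Fintype.card D - 1) * (2 ^ r) := by
          rw [Finset.sum_const, smul_eq_mul,
            Finset.card_erase_of_mem (Finset.mem_univ _), Finset.card_univ]
  -- contradiction
  rw [htot] at hub
  have hDpos : 0 < Fintype.card D := Fintype.card_pos
  have hnpos : 0 < (2 ^ r) := by positivity
  have hfin : Fintype.card D * (2 ^ r) ≤ Fintype.card D * (2 ^ r) - (2 ^ r) := by
    calc Fintype.card D * (2 ^ r) = (2 ^ r) * Fintype.card D := by ring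
      _ ≤ (Fintype.card D - 1) * (2 ^ r) := hub
      _ = Fintype.card D * (2 ^ r) - 1 * (2 ^ r) := by rw [Nat.sub_mul]
      _ = Fintype.card D * (2 ^ r) - (2 ^ r) := by rw [one_mul]
  have hlt : Fintype.card D * (2 ^ r) - (2 ^ r) < Fintype.card D * (2 ^ r) :=
    Nat.sub_lt (by positivity) hnpos
  omega
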